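/- If 𝒜(ū) and ℬ(ū) are q-symmetric generating series, then their ⋆-product 𝒜 ⋆ ℬ is again a q-symmetric generating series: its free coefficient equals 1 and each coefficient (𝒜⋆ℬ)(t̄_{n̄}) is q-symmetric in the variables of each type. -/

import Mathlib

noncomputable section

open scoped TensorProduct
open MvPolynomial

/-! ## Rational functions and the q-symmetrization machinery -/

variable (K : Type) [Field K] (ι : Type)

/-- The field `K(t)` of rational functions in the variables `t_i`, `i : ι`. -/
abbrev RatF := FractionRing (MvPolynomial ι K)

/-- The variable `t_i` as a rational function. -/
def tvar (i : ι) : RatF K ι := algebraMap (MvPolynomial ι K) (RatF K ι) (X i)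

/-- A scalar `c : K` as a constant rational function. -/
def cst (c : K) : RatF K ι := algebraMap K (RatF K ι) c

/-- Substitution of variables `t_i ↦ t_{f i}` along an injective map `f`, as a `K`-algebra
endomorphism of the field of rational functions. -/
def renHom (f : ι → ι) (hf : Function.Injective f) : RatF K ι →ₐ[K] RatF K ι :=
  IsFractionRing.liftAlgHom (R := K)
    (g := (IsScalarTower.toAlgHom K (MvPolynomial ι K) (RatF K ι)).comp (rename f))
    ((IsFractionRing.injective _ _).comp (rename_injective f hf))

variable (A : Type) [Ring A] [Algebra K A]

/-- The algebra `A(t) = A ⊗_K K(t)` of `A`-valued rational functions. -/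
abbrev AVal := A ⊗[K] RatF K ι

/-- The embedding `K(t) → A(t)`. -/
def inF : RatF K ι →ₐ[K] AVal K ι A := Algebra.TensorProduct.includeRight

/-- Substitution of variables `t_i ↦ t_{f i}` on `A`-valued rational functions. -/
def renA (f : ι → ι) (hf : Function.Injective f) : AVal K ι A →ₐ[K] AVal K ι A :=
  Algebra.TensorProduct.map (AlgHom.id K A) (renHom K ι f hf)

/-- Extension of a permutation of `Fin k` to a permutation of the whole variable index set `ι`
along an injective enumeration `v : Fin k → ι` of some of the variables. -/
def extPerm {k : ℕ} (v : Fin k → ι) (hv : Function.Injective v) (σ : Equiv.Perm (Fin k)) :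
    Equiv.Perm ι :=
  letI := Classical.decPred (· ∈ Set.range v)
  σ.extendDomain (Equiv.ofInjective v hv)

variable (q : K)

/-- The elementary weight `w(t_i/t_j) = (q⁻¹ − q t_i/t_j)/(q − q⁻¹ t_i/t_j)`. -/
def wfac (i j : ι) : RatF K ι :=
  (cst K ι q⁻¹ - cst K ι q * (tvar K ι i / tvar K ι j)) /
    (cst K ι q - cst K ι q⁻¹ * (tvar K ι i / tvar K ι j))

/-- The weight `∏_{ℓ<ℓ', σ(ℓ)>σ(ℓ')} w(t_{σ(ℓ')}/t_{σ(ℓ)})` of the operator `π(σ)` acting on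
functions of the variables `t_{v 0}, …, t_{v (k-1)}`. -/
def qWeight {k : ℕ} (v : Fin k → ι) (σ : Equiv.Perm (Fin k)) : RatF K ι :=
  ∏ p ∈ Finset.univ.filter (fun p : Fin k × Fin k => p.1 < p.2 ∧ σ p.2 < σ p.1),
    wfac K ι q (v (σ p.2)) (v (σ p.1))

/-- The operator `π(σ)`, `σ ∈ S_k`:
`π(σ)G = ∏_{ℓ<ℓ', σ(ℓ)>σ(ℓ')} w(t_{σ(ℓ')}/t_{σ(ℓ)}) ⬝ G(t_{σ(1)},…,t_{σ(k)})`, acting on `A`-valued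
rational functions of the variables `t_{v 0}, …, t_{v (k-1)}`. -/
def piOp {k : ℕ} (v : Fin k → ι) (hv : Function.Injective v) (σ : Equiv.Perm (Fin k)) :
    AVal K ι A → AVal K ι A := fun G =>
  inF K ι A (qWeight K ι q v σ) * renA K ι A (extPerm ι v hv σ) (Equiv.injective _) G

/-- The operator `π(σ_{i,j})` attached to a transposition:
`π(σ_{i,j})G = w(t_i/t_j) ⬝ (G with t_i, t_j interchanged)`.  For `j = i+1` this is the
operator `π(σ_{i,i+1})` of the paper. -/
def piElem (i j : ι) : AVal K ι A → AVal K ι A := fun G =>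
  letI := Classical.decEq ι
  inF K ι A (wfac K ι q i j) * renA K ι A (Equiv.swap i j) (Equiv.injective _) G

/-- The `q`-symmetrization operator `Sym̄ = (1/k!) ∑_{σ ∈ S_k} π(σ)` over the variables
`t_{v 0}, …, t_{v (k-1)}`. -/
def qSym {k : ℕ} (v : Fin k → ι) (hv : Function.Injective v) :
    AVal K ι A → AVal K ι A := fun G =>
  ((k.factorial : K))⁻¹ • ∑ σ : Equiv.Perm (Fin k), piOp K ι A q v hv σ G

/-! ## Multi-type generating series -/

/-- For the algebra with `N − 1` types of variables, the variables are `t^a_i`, indexed by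
pairs `(a, i) : ℕ × ℕ` (the type `a` and the position `i`). -/
abbrev ιM : Type := ℕ × ℕ

/-- The enumeration of the first `m` variables of type `a`. -/
def vtype (a m : ℕ) : Fin m → ιM := fun i => (a, (i : ℕ))

theorem vtype_inj (a m : ℕ) : Function.Injective (vtype a m) := fun x y h =>
  Fin.val_injective (congrArg Prod.snd h)

/-- The `q`-symmetrization over the variables `t̄_{n̄}`, applied independently to the variables
of each type: for each type `a` the first `n̄ a` variables of that type are `q`-symmetrized. -/
def symM (n : ℕ →₀ ℕ) : AVal K ιM A → AVal K ιM A :=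
  (n.support.sort (· ≤ ·)).foldr
    (fun a F => (qSym K ιM A q (vtype a (n a)) (vtype_inj a (n a)) ∘ F)) id

/-- The shift of variables `t^a_i ↦ t^a_{i + s a}` (each type shifted by its own amount). -/
def shiftFun (s : ℕ → ℕ) : ιM → ιM := fun x => (x.1, x.2 + s x.1)

theorem shiftFun_inj (s : ℕ → ℕ) : Function.Injective (shiftFun s) := by
  rintro ⟨a, i⟩ ⟨b, j⟩ h
  simp only [shiftFun, Prod.mk.injEq] at h
  obtain ⟨rfl, h2⟩ := h
  simp only [Prod.mk.injEq, true_and]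
  omega

/-- The rational series `Z_{s̄}(t̄_{n̄})`. -/
def Zser (N : ℕ) (s n : ℕ →₀ ℕ) : RatF K ιM :=
  ∏ a ∈ Finset.range (N - 2), ∏ l ∈ Finset.Ico (s a) (n a), ∏ l' ∈ Finset.range (s (a + 1)),
    (cst K ιM q - cst K ιM q⁻¹ * (tvar K ιM (a, l) / tvar K ιM (a + 1, l'))) /
      (1 - tvar K ιM (a, l) / tvar K ιM (a + 1, l'))

/-- A `q`-symmetric generating series in the parameters `u_1, …, u_{N-1}`: the family of its
coefficients `𝒜(t̄_{n̄})`, indexed by multi-indices `n̄` (finitely supported, and supported on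
the types `1, …, N−1`, represented `0`-based as `{0, …, N−2}`); the coefficient `𝒜(t̄_{n̄})`
is an `A`-valued rational function depending only on the variables `t̄_{n̄}`, `q`-symmetric in
the variables of each type, and the free coefficient is `1`. -/
structure QSeriesM (N : ℕ) : Type where
  /-- The coefficient at `u_1^{n̄ 0} ⋯ u_{N-1}^{n̄ (N-2)}`. -/
  coeff : (ℕ →₀ ℕ) → AVal K ιM A
  coeff_zero : coeff 0 = 1
  supp_types : ∀ n : ℕ →₀ ℕ, (¬ ∀ a, N - 1 ≤ a → n a = 0) → coeff n = 0
  qsymm : ∀ (n : ℕ →₀ ℕ) (a : ℕ) (σ : Equiv.Perm (Fin (n a))),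
    piOp K ιM A q (vtype a (n a)) (vtype_inj a (n a)) σ (coeff n) = coeff n
  supp_vars : ∀ (n : ℕ →₀ ℕ) (f : ιM → ιM) (hf : Function.Injective f),
    (∀ a i, i < n a → f (a, i) = (a, i)) → renA K ιM A f hf (coeff n) = coeff n

/-- The coefficient at `u^{n̄}` of the `⋆`-product of two generating series given by their
coefficient families:
`(𝒜⋆ℬ)(t̄_{n̄}) = ∑_{0̄ ≤ s̄ ≤ n̄} Sym̄_{t̄_{n̄}}( Z_{s̄}(t̄_{n̄}) ⬝ 𝒜(t̄_{(s̄,n̄]}) ⬝ ℬ(t̄_{(0̄,s̄]}) )`. -/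
def starM (N : ℕ) (f g : (ℕ →₀ ℕ) → AVal K ιM A) (n : ℕ →₀ ℕ) : AVal K ιM A :=
  ∑ s ∈ Finset.Iic n,
    symM K A q n
      (inF K ιM A (Zser K q N s n) *
        (renA K ιM A (shiftFun (s ·)) (shiftFun_inj _) (f (n - s)) * g s))

/-- The coefficients of the unit generating series `1`. -/
def oneM : (ℕ →₀ ℕ) → AVal K ιM A := fun n => if n = 0 then 1 else 0

/-- A multi-index is admissible if `n_1 ≥ n_2 ≥ ⋯`. -/
def Adm (n : ℕ →₀ ℕ) : Prop := ∀ a, n (a + 1) ≤ n a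


/-! ## Auxiliary lemmas -/

section Aux

variable {K : Type} [Field K] {ι : Type}

theorem renHom_tvar (f : ι → ι) (hf : Function.Injective f) (i : ι) :
    renHom K ι f hf (tvar K ι i) = tvar K ι (f i) := by
  unfold renHom tvar
  erw [IsFractionRing.liftAlgHom_apply, IsFractionRing.lift_algebraMap]
  simp [IsScalarTower.toAlgHom]

theorem cst_eq (c : K) : cst K ι c = algebraMap (MvPolynomial ι K) (RatF K ι) (C c) := by
  unfold cst
  rw [IsScalarTower.algebraMap_apply K (MvPolynomial ι K) (RatF K ι)]
  rfl

theorem ratf_hom_ext {S : Type} [CommRing S] [Algebra K S] (φ ψ : RatF K ι →ₐ[K] S)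
    (h : ∀ i, φ (tvar K ι i) = ψ (tvar K ι i)) : φ = ψ := by
  apply AlgHom.coe_ringHom_injective
  apply IsLocalization.ringHom_ext (nonZeroDivisors (MvPolynomial ι K))
  apply MvPolynomial.ringHom_ext
  · intro c
    simp only [RingHom.comp_apply, RingHom.coe_coe]
    rw [← cst_eq]
    exact (φ.commutes c).trans (ψ.commutes c).symm
  · intro i
    exact h i

theorem renHom_cst (f : ι → ι) (hf : Function.Injective f) (c : K) :
    renHom K ι f hf (cst K ι c) = cst K ι c := (renHom K ι f hf).commutes c

theorem renHom_comp (f g : ι → ι) (hf : Function.Injective f) (hg : Function.Injective g)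
    (x : RatF K ι) :
    renHom K ι f hf (renHom K ι g hg x) = renHom K ι (f ∘ g) (hf.comp hg) x := by
  have : (renHom K ι f hf).comp (renHom K ι g hg) = renHom K ι (f ∘ g) (hf.comp hg) := by
    apply ratf_hom_ext
    intro i
    simp [renHom_tvar, Function.comp]
  exact DFunLike.congr_fun this x

theorem renHom_congr {f g : ι → ι} (hf : Function.Injective f) (hg : Function.Injective g)
    (h : f = g) : renHom K ι f hf = renHom K ι g hg := by subst h; rfl

theorem renHom_id (f : ι → ι) (hf : Function.Injective f) (h : f = id) (x : RatF K ι) :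
    renHom K ι f hf x = x := by
  subst h
  have : renHom K ι id hf = AlgHom.id K (RatF K ι) := by
    apply ratf_hom_ext; intro i; simp [renHom_tvar]
  exact DFunLike.congr_fun this x

variable {A : Type} [Ring A] [Algebra K A]

theorem renA_inF (f : ι → ι) (hf : Function.Injective f) (x : RatF K ι) :
    renA K ι A f hf (inF K ι A x) = inF K ι A (renHom K ι f hf x) := by
  simp [renA, inF, Algebra.TensorProduct.map_tmul]

theorem renA_comp (f g : ι → ι) (hf : Function.Injective f) (hg : Function.Injective g)
    (G : AVal K ι A) :
    renA K ι A f hf (renA K ι A g hg G) = renA K ι A (f ∘ g) (hf.comp hg) G := by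
  have : (renA K ι A f hf).comp (renA K ι A g hg) = renA K ι A (f ∘ g) (hf.comp hg) := by
    unfold renA
    rw [← Algebra.TensorProduct.map_comp]
    congr 1
    apply ratf_hom_ext
    intro i
    simp [renHom_tvar, Function.comp]
  exact DFunLike.congr_fun this G

theorem renA_congr {f g : ι → ι} (hf : Function.Injective f) (hg : Function.Injective g)
    (h : f = g) : renA K ι A f hf = renA K ι A g hg := by subst h; rfl

theorem renA_id (f : ι → ι) (hf : Function.Injective f) (h : f = id) (G : AVal K ι A) :
    renA K ι A f hf G = G := by
  subst h
  have h1 : renHom K ι id hf = AlgHom.id K (RatF K ι) := by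
    apply ratf_hom_ext; intro i; simp [renHom_tvar]
  have : renA K ι A id hf = AlgHom.id K (AVal K ι A) := by
    unfold renA
    rw [h1, Algebra.TensorProduct.map_id]
  exact DFunLike.congr_fun this G

end Aux

section Wfac

variable {K : Type} [Field K] {ι : Type}

theorem tvar_ne_zero (i : ι) : tvar K ι i ≠ 0 := by
  unfold tvar
  rw [map_ne_zero_iff _ (IsFractionRing.injective (MvPolynomial ι K) (RatF K ι))]
  exact X_ne_zero i

theorem cst_ne_zero {c : K} (hc : c ≠ 0) : cst K ι c ≠ 0 := by
  unfold cst
  rw [map_ne_zero_iff _ (algebraMap K (RatF K ι)).injective]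
  exact hc

theorem tvar_div_ne_cst {i j : ι} (hij : i ≠ j) (c : K) :
    tvar K ι i / tvar K ι j ≠ cst K ι c := by
  classical
  intro h
  have hj := tvar_ne_zero (K := K) (ι := ι) j
  rw [div_eq_iff hj, cst_eq] at h
  unfold tvar at h
  rw [← map_mul] at h
  have h2 := IsFractionRing.injective (MvPolynomial ι K) (RatF K ι) h
  have hc := congrArg (MvPolynomial.coeff (Finsupp.single i 1)) h2
  rw [MvPolynomial.coeff_X_same, MvPolynomial.coeff_C_mul, MvPolynomial.coeff_X', if_neg] at hc
  · simpa using hc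
  · intro hh
    rcases (Finsupp.single_eq_single_iff _ _ _ _).mp hh with ⟨h1, _⟩ | ⟨h1, _⟩
    · exact hij h1.symm
    · exact one_ne_zero h1

theorem cst_inv (c : K) : cst K ι c⁻¹ = (cst K ι c)⁻¹ := map_inv₀ (algebraMap K (RatF K ι)) c

theorem wfac_mul_wfac (q : K) (hq : q ≠ 0) {i j : ι} (hij : i ≠ j) :
    wfac K ι q i j * wfac K ι q j i = 1 := by
  have hi := tvar_ne_zero (K := K) (ι := ι) i
  have hj := tvar_ne_zero (K := K) (ι := ι) j
  have hQ : cst K ι q ≠ 0 := cst_ne_zero hq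
  have hx : tvar K ι i / tvar K ι j ≠ 0 := div_ne_zero hi hj
  have key : ∀ (a b : ι), a ≠ b → cst K ι q - cst K ι q⁻¹ * (tvar K ι a / tvar K ι b) ≠ 0 := by
    intro a b hab h
    apply tvar_div_ne_cst hab (q * q)
    have h' := sub_eq_zero.mp h
    have step : tvar K ι a / tvar K ι b = cst K ι q * cst K ι q := by
      calc tvar K ι a / tvar K ι b
          = cst K ι q * (cst K ι q⁻¹ * (tvar K ι a / tvar K ι b)) := by
            rw [cst_inv, ← mul_assoc, mul_inv_cancel₀ hQ, one_mul]
        _ = cst K ι q * cst K ι q := by rw [← h']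
    rw [step]
    exact (map_mul (algebraMap K (RatF K ι)) q q).symm
  have hb := key i j hij
  have hd := key j i hij.symm
  unfold wfac
  rw [div_mul_div_comm, div_eq_one_iff_eq (mul_ne_zero hb hd)]
  have hinv : tvar K ι j / tvar K ι i = (tvar K ι i / tvar K ι j)⁻¹ := (inv_div _ _).symm
  rw [hinv, cst_inv]
  field_simp
  ring

theorem renHom_wfac (q : K) (f : ι → ι) (hf : Function.Injective f) (i j : ι) :
    renHom K ι f hf (wfac K ι q i j) = wfac K ι q (f i) (f j) := by
  unfold wfac
  simp only [map_div₀, map_sub, map_mul, renHom_tvar, renHom_cst]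

end Wfac

section ExtPerm

variable {K : Type} [Field K] {ι : Type}

theorem extPerm_apply_v {k : ℕ} (v : Fin k → ι) (hv : Function.Injective v)
    (σ : Equiv.Perm (Fin k)) (i : Fin k) : extPerm ι v hv σ (v i) = v (σ i) := by
  letI := Classical.decPred (· ∈ Set.range v)
  unfold extPerm
  have := Equiv.Perm.extendDomain_apply_image (e := σ)
    (f := Equiv.ofInjective v hv) (a := i)
  simpa [Equiv.ofInjective] using this

theorem extPerm_apply_notMem {k : ℕ} (v : Fin k → ι) (hv : Function.Injective v)
    (σ : Equiv.Perm (Fin k)) {x : ι} (hx : x ∉ Set.range v) : extPerm ι v hv σ x = x := by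
  letI := Classical.decPred (· ∈ Set.range v)
  unfold extPerm
  exact Equiv.Perm.extendDomain_apply_not_subtype _ _ hx

theorem extPerm_mul {k : ℕ} (v : Fin k → ι) (hv : Function.Injective v)
    (σ τ : Equiv.Perm (Fin k)) :
    ⇑(extPerm ι v hv σ) ∘ ⇑(extPerm ι v hv τ) = ⇑(extPerm ι v hv (σ * τ)) := by
  letI := Classical.decPred (· ∈ Set.range v)
  unfold extPerm
  funext x
  simp only [Function.comp_apply, ← Equiv.Perm.extendDomain_mul]
  rfl

theorem extPerm_one {k : ℕ} (v : Fin k → ι) (hv : Function.Injective v) :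
    ⇑(extPerm ι v hv (1 : Equiv.Perm (Fin k))) = id := by
  letI := Classical.decPred (· ∈ Set.range v)
  unfold extPerm
  rw [Equiv.Perm.extendDomain_one]
  rfl

end ExtPerm

section Cocycle

variable {K : Type} [Field K] {ι : Type}

/-- Conditional version of the elementary weight factor. -/
def Ffac (q : K) {k : ℕ} (v : Fin k → ι) (σ : Equiv.Perm (Fin k)) (p : Fin k × Fin k) :
    RatF K ι :=
  if σ p.2 < σ p.1 then wfac K ι q (v (σ p.2)) (v (σ p.1)) else 1

theorem qWeight_eq_prod_F (q : K) {k : ℕ} (v : Fin k → ι) (σ : Equiv.Perm (Fin k)) :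
    qWeight K ι q v σ =
      ∏ p ∈ Finset.univ.filter (fun p : Fin k × Fin k => p.1 < p.2), Ffac q v σ p := by
  unfold qWeight Ffac
  rw [← Finset.filter_filter, Finset.prod_filter]

/-- Sorting the image of a pair under a permutation. -/
def sortP {k : ℕ} (τ : Equiv.Perm (Fin k)) (p : Fin k × Fin k) : Fin k × Fin k :=
  if τ p.1 < τ p.2 then (τ p.1, τ p.2) else (τ p.2, τ p.1)

theorem sortP_mem {k : ℕ} (τ : Equiv.Perm (Fin k)) {p : Fin k × Fin k} (hp : p.1 < p.2) :
    (sortP τ p).1 < (sortP τ p).2 := by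
  unfold sortP
  have hne : τ p.1 ≠ τ p.2 := fun h => absurd (τ.injective h) (ne_of_lt hp)
  rcases lt_or_gt_of_ne hne with h | h
  · rw [if_pos h]; exact h
  · rw [if_neg (not_lt_of_gt h)]; exact h

theorem sortP_sortP {k : ℕ} (τ : Equiv.Perm (Fin k)) {p : Fin k × Fin k} (hp : p.1 < p.2) :
    sortP τ⁻¹ (sortP τ p) = p := by
  unfold sortP
  have hne : τ p.1 ≠ τ p.2 := fun h => absurd (τ.injective h) (ne_of_lt hp)
  rcases lt_or_gt_of_ne hne with h | h
  · rw [if_pos h]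
    simp only [Equiv.Perm.coe_inv, Equiv.symm_apply_apply]
    rw [if_pos hp]
  · rw [if_neg (not_lt_of_gt h)]
    simp only [Equiv.Perm.coe_inv, Equiv.symm_apply_apply]
    rw [if_neg (lt_asymm hp)]

theorem prod_sortP {k : ℕ} (τ : Equiv.Perm (Fin k)) (f : Fin k × Fin k → RatF K ι) :
    ∏ p ∈ Finset.univ.filter (fun p : Fin k × Fin k => p.1 < p.2), f (sortP τ p) =
      ∏ p ∈ Finset.univ.filter (fun p : Fin k × Fin k => p.1 < p.2), f p := by
  apply Finset.prod_nbij' (i := sortP τ) (j := sortP τ⁻¹)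
  · intro a ha
    simp only [Finset.mem_filter, Finset.mem_univ, true_and] at ha ⊢
    exact sortP_mem τ ha
  · intro a ha
    simp only [Finset.mem_filter, Finset.mem_univ, true_and] at ha ⊢
    exact sortP_mem τ⁻¹ ha
  · intro a ha
    simp only [Finset.mem_filter, Finset.mem_univ, true_and] at ha
    exact sortP_sortP τ ha
  · intro a ha
    simp only [Finset.mem_filter, Finset.mem_univ, true_and] at ha
    have := sortP_sortP (τ := τ⁻¹) ha
    rw [inv_inv] at this
    exact this
  · intro a _
    rfl

theorem renHom_Ffac (q : K) {k : ℕ} (v : Fin k → ι) (hv : Function.Injective v)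
    (σ τ : Equiv.Perm (Fin k)) (p : Fin k × Fin k) :
    renHom K ι (extPerm ι v hv σ) (Equiv.injective _) (Ffac q v τ p) =
      if τ p.2 < τ p.1 then wfac K ι q (v (σ (τ p.2))) (v (σ (τ p.1))) else 1 := by
  unfold Ffac
  rw [apply_ite (renHom K ι (extPerm ι v hv σ) (Equiv.injective _)), map_one,
    renHom_wfac, extPerm_apply_v, extPerm_apply_v]

theorem Ffac_cocycle (q : K) (hq : q ≠ 0) {k : ℕ} (v : Fin k → ι)
    (hv : Function.Injective v) (σ τ : Equiv.Perm (Fin k)) {p : Fin k × Fin k}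
    (hp : p.1 < p.2) :
    Ffac q v (σ * τ) p =
      Ffac q v σ (sortP τ p) *
        renHom K ι (extPerm ι v hv σ) (Equiv.injective _) (Ffac q v τ p) := by
  rw [renHom_Ffac]
  have hne : τ p.1 ≠ τ p.2 := fun h => absurd (τ.injective h) (ne_of_lt hp)
  have hne2 : σ (τ p.1) ≠ σ (τ p.2) := fun h => hne (σ.injective h)
  rcases lt_or_gt_of_ne hne with h | h
  · simp [Ffac, sortP, Equiv.Perm.mul_apply, h, lt_asymm h]
    rfl
  · rcases lt_or_gt_of_ne hne2 with h2 | h2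
    · rw [Ffac, if_neg (show ¬ (σ * τ) p.2 < (σ * τ) p.1 from lt_asymm h2)]
      simp only [Ffac, sortP, Equiv.Perm.mul_apply, if_neg (lt_asymm h), if_pos h,
        if_neg (lt_asymm h2), if_pos h2]
      exact (wfac_mul_wfac q hq (fun hh => (ne_of_lt h2) (hv hh))).symm
    · rw [Ffac, if_pos (show (σ * τ) p.2 < (σ * τ) p.1 from h2)]
      simp only [Ffac, sortP, Equiv.Perm.mul_apply, if_neg (lt_asymm h), if_pos h,
        if_neg (lt_asymm h2), if_pos h2, one_mul]

theorem qWeight_cocycle (q : K) (hq : q ≠ 0) {k : ℕ} (v : Fin k → ι)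
    (hv : Function.Injective v) (σ τ : Equiv.Perm (Fin k)) :
    qWeight K ι q v (σ * τ) =
      qWeight K ι q v σ *
        renHom K ι (extPerm ι v hv σ) (Equiv.injective _) (qWeight K ι q v τ) := by
  rw [qWeight_eq_prod_F, qWeight_eq_prod_F, qWeight_eq_prod_F, map_prod,
    ← prod_sortP τ (Ffac q v σ), ← Finset.prod_mul_distrib]
  apply Finset.prod_congr rfl
  intro p hp
  simp only [Finset.mem_filter, Finset.mem_univ, true_and] at hp
  exact Ffac_cocycle q hq v hv σ τ hp

end Cocycle

section PiOpFacts

variable {K : Type} [Field K] {ι A : Type} [Ring A] [Algebra K A]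

theorem piOp_mul (q : K) (hq : q ≠ 0) {k : ℕ} (v : Fin k → ι) (hv : Function.Injective v)
    (σ τ : Equiv.Perm (Fin k)) (G : AVal K ι A) :
    piOp K ι A q v hv σ (piOp K ι A q v hv τ G) = piOp K ι A q v hv (σ * τ) G := by
  unfold piOp
  rw [map_mul, renA_inF, renA_comp, ← mul_assoc, ← map_mul,
    ← qWeight_cocycle q hq v hv σ τ,
    renA_congr _ (Equiv.injective (extPerm ι v hv (σ * τ))) (extPerm_mul v hv σ τ)]

theorem piOp_one (q : K) {k : ℕ} (v : Fin k → ι) (hv : Function.Injective v)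
    (G : AVal K ι A) : piOp K ι A q v hv 1 G = G := by
  unfold piOp
  have h1 : qWeight K ι q v (1 : Equiv.Perm (Fin k)) = 1 := by
    unfold qWeight
    apply Finset.prod_eq_one
    intro p hp
    rw [Finset.mem_filter] at hp
    simp only [Finset.mem_filter, Equiv.Perm.one_apply] at hp
    exact absurd hp.2.2 (lt_asymm hp.2.1)
  rw [h1, map_one, one_mul, renA_id _ _ (extPerm_one v hv)]

theorem piOp_add (q : K) {k : ℕ} (v : Fin k → ι) (hv : Function.Injective v)
    (σ : Equiv.Perm (Fin k)) (G H : AVal K ι A) :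
    piOp K ι A q v hv σ (G + H) = piOp K ι A q v hv σ G + piOp K ι A q v hv σ H := by
  unfold piOp
  rw [map_add, mul_add]

theorem piOp_smul (q : K) {k : ℕ} (v : Fin k → ι) (hv : Function.Injective v)
    (σ : Equiv.Perm (Fin k)) (c : K) (G : AVal K ι A) :
    piOp K ι A q v hv σ (c • G) = c • piOp K ι A q v hv σ G := by
  unfold piOp
  rw [map_smul, mul_smul_comm]

theorem piOp_sum (q : K) {k : ℕ} (v : Fin k → ι) (hv : Function.Injective v)
    (σ : Equiv.Perm (Fin k)) {β : Type} (s : Finset β) (f : β → AVal K ι A) :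
    piOp K ι A q v hv σ (∑ b ∈ s, f b) = ∑ b ∈ s, piOp K ι A q v hv σ (f b) := by
  unfold piOp
  rw [map_sum, Finset.mul_sum]

theorem piOp_qSym (q : K) (hq : q ≠ 0) {k : ℕ} (v : Fin k → ι) (hv : Function.Injective v)
    (σ : Equiv.Perm (Fin k)) (G : AVal K ι A) :
    piOp K ι A q v hv σ (qSym K ι A q v hv G) = qSym K ι A q v hv G := by
  unfold qSym
  rw [piOp_smul, piOp_sum]
  congr 1
  have : ∀ τ, piOp K ι A q v hv σ (piOp K ι A q v hv τ G) = piOp K ι A q v hv (σ * τ) G :=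
    fun τ => piOp_mul q hq v hv σ τ G
  rw [Finset.sum_congr rfl (fun τ _ => this τ)]
  exact Fintype.sum_equiv (Equiv.mulLeft σ) _ _ (fun τ => rfl)

end PiOpFacts

section CrossType

variable {K : Type} [Field K] {A : Type} [Ring A] [Algebra K A]

theorem notMem_range_vtype {b : ℕ} {x : ιM} (hx : x.1 ≠ b) (m : ℕ) :
    x ∉ Set.range (vtype b m) := by
  rintro ⟨i, rfl⟩
  exact hx rfl

theorem extPerm_vtype_fst {a k : ℕ} (σ : Equiv.Perm (Fin k)) (x : ιM) :
    (extPerm ιM (vtype a k) (vtype_inj a k) σ x).1 = x.1 := by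
  by_cases hx : x ∈ Set.range (vtype a k)
  · obtain ⟨m, rfl⟩ := hx
    rw [extPerm_apply_v]
    rfl
  · rw [extPerm_apply_notMem _ _ _ hx]

theorem extPerm_comm {a b k m : ℕ} (hab : a ≠ b) (σ : Equiv.Perm (Fin k))
    (τ : Equiv.Perm (Fin m)) :
    ⇑(extPerm ιM (vtype a k) (vtype_inj a k) σ) ∘ ⇑(extPerm ιM (vtype b m) (vtype_inj b m) τ) =
      ⇑(extPerm ιM (vtype b m) (vtype_inj b m) τ) ∘
        ⇑(extPerm ιM (vtype a k) (vtype_inj a k) σ) := by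
  funext x
  simp only [Function.comp_apply]
  by_cases hxa : x.1 = a
  · have hxb : x.1 ≠ b := hxa ▸ hab
    rw [extPerm_apply_notMem _ _ _ (notMem_range_vtype hxb m)]
    have : (extPerm ιM (vtype a k) (vtype_inj a k) σ x).1 ≠ b := by
      rw [extPerm_vtype_fst]; exact hxb
    rw [extPerm_apply_notMem _ _ _ (notMem_range_vtype this m)]
  · rw [extPerm_apply_notMem _ _ _ (notMem_range_vtype hxa k)]
    by_cases hxb : x.1 = b
    · have : (extPerm ιM (vtype b m) (vtype_inj b m) τ x).1 ≠ a := by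
        rw [extPerm_vtype_fst]; exact hxa
      rw [extPerm_apply_notMem _ _ _ (notMem_range_vtype this k)]
    · rw [extPerm_apply_notMem _ _ _ (notMem_range_vtype hxb m),
        extPerm_apply_notMem _ _ _ (notMem_range_vtype hxa k)]

theorem renHom_qWeight_other (q : K) {a b k m : ℕ} (hab : a ≠ b) (σ : Equiv.Perm (Fin k))
    (τ : Equiv.Perm (Fin m)) :
    renHom K ιM (⇑(extPerm ιM (vtype a k) (vtype_inj a k) σ)) (Equiv.injective _)
        (qWeight K ιM q (vtype b m) τ) = qWeight K ιM q (vtype b m) τ := by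
  unfold qWeight
  rw [map_prod]
  apply Finset.prod_congr rfl
  intro p _
  rw [renHom_wfac]
  have h1 : ∀ i : Fin m, extPerm ιM (vtype a k) (vtype_inj a k) σ (vtype b m i) =
      vtype b m i := fun i =>
    extPerm_apply_notMem _ _ _ (notMem_range_vtype (show b ≠ a from hab.symm) k)
  rw [h1, h1]

theorem piOp_comm (q : K) {a b k m : ℕ} (hab : a ≠ b) (σ : Equiv.Perm (Fin k))
    (τ : Equiv.Perm (Fin m)) (G : AVal K ιM A) :
    piOp K ιM A q (vtype a k) (vtype_inj a k) σ
        (piOp K ιM A q (vtype b m) (vtype_inj b m) τ G) =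
      piOp K ιM A q (vtype b m) (vtype_inj b m) τ
        (piOp K ιM A q (vtype a k) (vtype_inj a k) σ G) := by
  unfold piOp
  rw [map_mul, renA_inF, renA_comp, map_mul, renA_inF, renA_comp, ← mul_assoc, ← mul_assoc,
    ← map_mul, ← map_mul, renHom_qWeight_other q hab σ τ,
    renHom_qWeight_other q hab.symm τ σ,
    mul_comm (qWeight K ιM q (vtype a k) σ) (qWeight K ιM q (vtype b m) τ),
    renA_congr _ (((extPerm ιM (vtype b m) (vtype_inj b m) τ).injective).comp
      ((extPerm ιM (vtype a k) (vtype_inj a k) σ).injective)) (extPerm_comm hab σ τ)]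

theorem piOp_qSym_comm (q : K) {a b k m : ℕ} (hab : a ≠ b) (σ : Equiv.Perm (Fin k))
    (G : AVal K ιM A) :
    piOp K ιM A q (vtype a k) (vtype_inj a k) σ
        (qSym K ιM A q (vtype b m) (vtype_inj b m) G) =
      qSym K ιM A q (vtype b m) (vtype_inj b m)
        (piOp K ιM A q (vtype a k) (vtype_inj a k) σ G) := by
  unfold qSym
  rw [piOp_smul, piOp_sum]
  congr 1
  apply Finset.sum_congr rfl
  intro τ _
  exact piOp_comm q hab σ τ G

end CrossType

section SymMFacts

variable {K : Type} [Field K] {A : Type} [Ring A] [Algebra K A]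

theorem piOp_foldr (q : K) (hq : q ≠ 0) (n : ℕ →₀ ℕ) (a : ℕ)
    (σ : Equiv.Perm (Fin (n a))) (L : List ℕ) (ha : a ∈ L) (G : AVal K ιM A) :
    piOp K ιM A q (vtype a (n a)) (vtype_inj a (n a)) σ
        (L.foldr (fun b F => (qSym K ιM A q (vtype b (n b)) (vtype_inj b (n b)) ∘ F)) id G) =
      L.foldr (fun b F => (qSym K ιM A q (vtype b (n b)) (vtype_inj b (n b)) ∘ F)) id G := by
  induction L with
  | nil => exact absurd ha (List.not_mem_nil)
  | cons b L ih =>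
    simp only [List.foldr_cons, Function.comp_apply]
    by_cases hab : a = b
    · subst hab
      exact piOp_qSym q hq _ _ σ _
    · rw [piOp_qSym_comm q hab σ, ih (by
        rcases List.mem_cons.mp ha with h | h
        · exact absurd h hab
        · exact h)]

theorem piOp_symM (q : K) (hq : q ≠ 0) (n : ℕ →₀ ℕ) (a : ℕ)
    (σ : Equiv.Perm (Fin (n a))) (G : AVal K ιM A) :
    piOp K ιM A q (vtype a (n a)) (vtype_inj a (n a)) σ (symM K A q n G) =
      symM K A q n G := by
  by_cases hna : n a = 0
  · have hσ : σ = 1 := by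
      apply Equiv.ext
      intro x
      exact absurd x.isLt (by omega)
    subst hσ
    exact piOp_one q _ _ _
  · unfold symM
    exact piOp_foldr q hq n a σ _ (by
      rw [Finset.mem_sort]
      exact Finsupp.mem_support_iff.mpr hna) G

theorem symM_zero (q : K) (G : AVal K ιM A) : symM K A q 0 G = G := by
  unfold symM
  rw [Finsupp.support_zero, Finset.sort_empty]
  rfl

theorem Iic_zero_finsupp : (Finset.Iic (0 : ℕ →₀ ℕ)) = {0} := by
  ext s
  simp [Finset.mem_Iic, nonpos_iff_eq_zero]

theorem Zser_zero (q : K) (N : ℕ) : Zser K q N 0 0 = 1 := by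
  unfold Zser
  apply Finset.prod_eq_one
  intro a _
  apply Finset.prod_eq_one
  intro l hl
  simp at hl

end SymMFacts

/-- The `⋆`-product of two `q`-symmetric generating series is again a
`q`-symmetric generating series: its free coefficient equals `1` and each coefficient is
`q`-symmetric in the variables of each type. -/
theorem star_closed
    (K : Type) [Field K] [CharZero K] (q : K) (hq : q ≠ 0) (hq2 : q ^ 2 ≠ 1)
    (A : Type) [Ring A] [Algebra K A] (N : ℕ) (hN : 2 ≤ N) (SA SB : QSeriesM K A q N) :
    starM K A q N SA.coeff SB.coeff 0 = 1 ∧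
      ∀ (n : ℕ →₀ ℕ) (a : ℕ) (σ : Equiv.Perm (Fin (n a))),
        piOp K ιM A q (vtype a (n a)) (vtype_inj a (n a)) σ
            (starM K A q N SA.coeff SB.coeff n) =
          starM K A q N SA.coeff SB.coeff n := by
  constructor
  · unfold starM
    rw [Iic_zero_finsupp, Finset.sum_singleton, Zser_zero, map_one, one_mul, tsub_zero,
      SA.coeff_zero, SB.coeff_zero, map_one, one_mul, symM_zero]
  · intro n a σ
    unfold starM
    rw [piOp_sum]
    apply Finset.sum_congr rfl
    intro s _
    exact piOp_symM q hq n a σ _
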